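/- Let Γ be a lattice in SL₂(ℝ) commensurable with a cocompact arithmetic lattice arising from a quaternion division algebra A over ℚ, and for z ∈ ℙ¹(ℝ) let C(Γ, z) = χ_z(COM(Γ) ∩ P_z) ⊆ ℝ_{>0}, where P_z is the stabilizer of z and χ_z the eigenvalue-ratio character. Then C(Γ, z) ∩ ℚ* = {1} for every z. -/

import Mathlib

/-- `SL₂(ℝ)`. -/
abbrev SL2R := Matrix.SpecialLinearGroup (Fin 2) ℝ

/-- The conjugate subgroup `g⁻¹ Γ g`. -/
def conjSubgroup (g : SL2R) (Γ : Subgroup SL2R) : Subgroup SL2R :=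
  Subgroup.map ((MulAut.conj g⁻¹).toMonoidHom) Γ

/-- The commensurator of `Γ` in `SL₂(ℝ)` as a set. -/
def commenSet (Γ : Subgroup SL2R) : Set SL2R :=
  {g | (conjSubgroup g Γ).relIndex Γ ≠ 0 ∧ Γ.relIndex (conjSubgroup g Γ) ≠ 0}

/-- The embedding `φ` of the quaternion algebra `(a,b/ℚ)` into `M₂(ℝ)`:
`φ(x₀ + x₁ω + x₂Ω + x₃ωΩ) = (ξ̄, η; b η̄, ξ)`, `ξ = x₀ - x₁√a`, `η = x₂ + x₃√a`. -/
noncomputable def phiMat (a b : ℚ) (x₀ x₁ x₂ x₃ : ℤ) : Matrix (Fin 2) (Fin 2) ℝ :=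
  !![(x₀ : ℝ) + x₁ * Real.sqrt a, (x₂ : ℝ) + x₃ * Real.sqrt a;
     (b : ℝ) * ((x₂ : ℝ) - x₃ * Real.sqrt a), (x₀ : ℝ) - x₁ * Real.sqrt a]

namespace BSZAux

open Matrix Pointwise

/-! ### Elementary lemmas -/

lemma pow_ne_pow_of_mul_one {β γ : ℝ} (h1 : β * γ = 1) (hne : β ≠ γ) {k : ℕ} (hk : k ≠ 0) :
    β ^ k ≠ γ ^ k := by
  intro h
  have hβ : β ≠ 0 := by rintro rfl; simp at h1
  have h2 : (β * β) ^ k = 1 := by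
    calc (β * β) ^ k = β ^ k * β ^ k := by rw [mul_pow]
      _ = β ^ k * γ ^ k := by rw [h]
      _ = (β * γ) ^ k := (mul_pow _ _ _).symm
      _ = 1 := by rw [h1, one_pow]
  have hββ : β * β = 1 := by
    rcases lt_trichotomy (β * β) 1 with hlt | heq | hgt
    · have := pow_lt_one₀ (mul_self_nonneg β) hlt hk
      rw [h2] at this; exact absurd this (lt_irrefl 1)
    · exact heq
    · have := one_lt_pow₀ hgt hk
      rw [h2] at this; exact absurd this (lt_irrefl 1)
  apply hne
  exact mul_left_cancel₀ hβ (by rw [hββ, h1])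

lemma pell_rat (q : ℚ) (h0 : 0 < q) (hns : ¬ IsSquare q) :
    ∃ x y : ℤ, (x : ℚ) ^ 2 - q * (y : ℚ) ^ 2 = 1 ∧ (y : ℚ) ≠ 0 := by
  have hden : ((q.den : ℚ)) ≠ 0 := by exact_mod_cast q.den_ne_zero
  have hq : q * (q.den : ℚ) = (q.num : ℚ) := by
    nth_rewrite 1 [← Rat.num_div_den q]
    exact div_mul_cancel₀ _ hden
  have hd0 : (0 : ℤ) < q.num * (q.den : ℤ) := by
    apply mul_pos
    · exact Rat.num_pos.mpr h0
    · exact_mod_cast q.den_pos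
  have hdns : ¬ IsSquare (q.num * (q.den : ℤ)) := by
    rintro ⟨e, he⟩
    apply hns
    refine ⟨(e : ℚ) / (q.den : ℚ), ?_⟩
    rw [div_mul_div_comm, eq_div_iff (by positivity)]
    have : ((q.num : ℚ)) * ((q.den : ℤ) : ℚ) = (e : ℚ) * (e : ℚ) := by exact_mod_cast he
    push_cast at this
    calc q * ((q.den : ℚ) * q.den) = (q * q.den) * q.den := by ring
      _ = (q.num : ℚ) * q.den := by rw [hq]
      _ = (e : ℚ) * e := this
  obtain ⟨x, y, hxy, hy⟩ := Pell.exists_of_not_isSquare hd0 hdns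
  refine ⟨x, (q.den : ℤ) * y, ?_, ?_⟩
  · have hcast : (x : ℚ) ^ 2 - ((q.num * (q.den : ℤ) : ℤ) : ℚ) * (y : ℚ) ^ 2 = 1 := by
      exact_mod_cast hxy
    push_cast at hcast ⊢
    calc (x : ℚ) ^ 2 - q * ((q.den : ℚ) * y) ^ 2
        = (x : ℚ) ^ 2 - ((q * q.den) * q.den) * (y : ℚ) ^ 2 := by ring
      _ = (x : ℚ) ^ 2 - ((q.num : ℚ) * q.den) * (y : ℚ) ^ 2 := by rw [hq]
      _ = 1 := hcast
  · push_cast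
    exact mul_ne_zero hden (by exact_mod_cast hy)

lemma sqrt_rat_comb {a : ℚ} (ha : 0 < a) (hns : ¬ IsSquare a) {p q : ℚ}
    (h : (p : ℝ) + (q : ℝ) * Real.sqrt a = 0) : p = 0 ∧ q = 0 := by
  have haR : (0 : ℝ) ≤ (a : ℝ) := by positivity
  by_cases hq : q = 0
  · refine ⟨?_, hq⟩
    rw [hq] at h
    have : (p : ℝ) = 0 := by simpa using h
    exact_mod_cast this
  · exfalso
    apply hns
    have hqR : (q : ℝ) ≠ 0 := by exact_mod_cast hq
    have hs : Real.sqrt a = ((-p / q : ℚ) : ℝ) := by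
      push_cast
      field_simp
      linarith [h]
    have h2 : (a : ℝ) = (((-p / q) * (-p / q) : ℚ) : ℝ) := by
      rw [← Real.mul_self_sqrt haR, hs]; push_cast; ring
    exact ⟨-p / q, by exact_mod_cast h2⟩


noncomputable def phiS (b s : ℝ) (y : Fin 4 → ℝ) : Matrix (Fin 2) (Fin 2) ℝ :=
  !![y 0 + y 1 * s, y 2 + y 3 * s; b * (y 2 - y 3 * s), y 0 - y 1 * s]

def qmulR (A B : ℝ) (x y : Fin 4 → ℝ) : Fin 4 → ℝ :=
  ![x 0 * y 0 + A * (x 1 * y 1) + B * (x 2 * y 2) - A * B * (x 3 * y 3),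
    x 0 * y 1 + x 1 * y 0 - B * (x 2 * y 3) + B * (x 3 * y 2),
    x 0 * y 2 + x 2 * y 0 + A * (x 1 * y 3) - A * (x 3 * y 1),
    x 0 * y 3 + x 3 * y 0 + x 1 * y 2 - x 2 * y 1]

def qmulQ (A B : ℚ) (x y : Fin 4 → ℚ) : Fin 4 → ℚ :=
  ![x 0 * y 0 + A * (x 1 * y 1) + B * (x 2 * y 2) - A * B * (x 3 * y 3),
    x 0 * y 1 + x 1 * y 0 - B * (x 2 * y 3) + B * (x 3 * y 2),
    x 0 * y 2 + x 2 * y 0 + A * (x 1 * y 3) - A * (x 3 * y 1),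
    x 0 * y 3 + x 3 * y 0 + x 1 * y 2 - x 2 * y 1]

def castVec (y : Fin 4 → ℚ) : Fin 4 → ℝ := fun i => (y i : ℝ)

lemma castVec_qmul (A B : ℚ) (x y : Fin 4 → ℚ) :
    castVec (qmulQ A B x y) = qmulR (A : ℝ) (B : ℝ) (castVec x) (castVec y) := by
  funext i
  fin_cases i <;> simp [castVec, qmulQ, qmulR] <;> push_cast <;> ring

lemma castVec_smul (q : ℚ) (y : Fin 4 → ℚ) :
    castVec (q • y) = (q : ℝ) • castVec y := by
  funext i; simp [castVec]

lemma phiS_smul (b s c : ℝ) (y : Fin 4 → ℝ) :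
    phiS b s (c • y) = c • phiS b s y := by
  ext i j; fin_cases i <;> fin_cases j <;> simp [phiS] <;> ring

lemma phiS_mul (b s : ℝ) (x y : Fin 4 → ℝ) :
    phiS b s x * phiS b s y = phiS b s (qmulR (s * s) b x y) := by
  ext i j
  fin_cases i <;> fin_cases j <;>
    simp [phiS, qmulR, Matrix.mul_apply, Fin.sum_univ_two] <;> ring

lemma det_phiS (b s : ℝ) (y : Fin 4 → ℝ) :
    (phiS b s y).det = y 0 ^ 2 - (s * s) * y 1 ^ 2 - b * y 2 ^ 2 + (s * s) * b * y 3 ^ 2 := by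
  simp [phiS, Matrix.det_fin_two_of]; ring

lemma phiS_inj {b s : ℝ} (hb : b ≠ 0) (hs : s ≠ 0) {x y : Fin 4 → ℝ}
    (h : phiS b s x = phiS b s y) : x = y := by
  have h00 := congrFun (congrFun h 0) 0
  have h01 := congrFun (congrFun h 0) 1
  have h10 := congrFun (congrFun h 1) 0
  have h11 := congrFun (congrFun h 1) 1
  simp [phiS] at h00 h01 h10 h11
  have h10' : x 2 - x 3 * s = y 2 - y 3 * s := h10.resolve_right hb
  have e0 : x 0 = y 0 := by linarith
  have e1 : x 1 = y 1 := mul_right_cancel₀ hs (by linarith)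
  have e2 : x 2 = y 2 := by linarith
  have e3 : x 3 = y 3 := mul_right_cancel₀ hs (by linarith)
  funext i
  fin_cases i
  · exact e0
  · exact e1
  · exact e2
  · exact e3

lemma phiS_e0 (b s : ℝ) : phiS b s (castVec ![1, 0, 0, 0]) = 1 := by
  ext i j; fin_cases i <;> fin_cases j <;> simp [phiS, castVec, Matrix.one_apply]

lemma phiS_zero (b s : ℝ) : phiS b s 0 = 0 := by
  ext i j; fin_cases i <;> fin_cases j <;> simp [phiS]

lemma phiS_comb (b s : ℝ) (c0 c1 c2 c3 : ℝ) (u0 u1 u2 u3 : Fin 4 → ℝ) :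
    phiS b s (c0 • u0 + c1 • u1 + c2 • u2 + c3 • u3)
      = c0 • phiS b s u0 + c1 • phiS b s u1 + c2 • phiS b s u2 + c3 • phiS b s u3 := by
  ext i j; fin_cases i <;> fin_cases j <;> simp [phiS] <;> ring

lemma diag_pow (α δ : ℝ) (k : ℕ) :
    (!![α, 0; 0, δ] : Matrix (Fin 2) (Fin 2) ℝ) ^ k = !![α ^ k, 0; 0, δ ^ k] := by
  induction k with
  | zero => simp [Matrix.one_fin_two]
  | succ n ih =>
    rw [pow_succ, ih, Matrix.mul_fin_two]
    norm_num [pow_succ]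

lemma Mc_pow (c u X T : ℝ) (hu : u * u = c) (k : ℕ) : ∃ S' T' : ℝ,
    (!![X, T; c * T, X] : Matrix (Fin 2) (Fin 2) ℝ) ^ k = !![S', T'; c * T', S'] ∧
    S' + T' * u = (X + T * u) ^ k ∧ S' - T' * u = (X - T * u) ^ k := by
  induction k with
  | zero => exact ⟨1, 0, by rw [pow_zero, Matrix.one_fin_two]; norm_num, by norm_num, by norm_num⟩
  | succ n ih =>
    obtain ⟨S', T', hm, hp, hq⟩ := ih
    refine ⟨S' * X + c * (T' * T), S' * T + T' * X, ?_, ?_, ?_⟩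
    · rw [pow_succ, hm, Matrix.mul_fin_two]
      ext i j; fin_cases i <;> fin_cases j <;> simp <;> ring
    · rw [pow_succ, ← hp]; linear_combination (-(T' * T)) * hu
    · rw [pow_succ, ← hq]; linear_combination (-(T' * T)) * hu

lemma det_sub_smul (M : Matrix (Fin 2) (Fin 2) ℝ) (x : ℝ) :
    (M - x • 1).det = x ^ 2 - (M 0 0 + M 1 1) * x + M.det := by
  simp [Matrix.det_fin_two, Matrix.sub_apply, Matrix.smul_apply, Matrix.one_apply]; ring

lemma conj_vecMulVec (A B : Matrix (Fin 2) (Fin 2) ℝ) (u w : Fin 2 → ℝ) :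
    A * vecMulVec u w * B = vecMulVec (A *ᵥ u) (w ᵥ* B) := by
  ext i j
  fin_cases i <;> simp [Matrix.mul_apply, vecMulVec_apply, Matrix.mulVec, Matrix.vecMul, dotProduct,
    Fin.sum_univ_two] <;>
  ring

lemma vecMulVec_smul_smul (c d : ℝ) (u w : Fin 2 → ℝ) :
    vecMulVec (c • u) (d • w) = (c * d) • vecMulVec u w := by
  ext i j; simp [vecMulVec_apply]; ring


lemma phiMat_eq_phiS (a b : ℚ) (x₀ x₁ x₂ x₃ : ℤ) :
    phiMat a b x₀ x₁ x₂ x₃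
      = phiS (b : ℝ) (Real.sqrt a) (castVec ![(x₀ : ℚ), (x₁ : ℚ), (x₂ : ℚ), (x₃ : ℚ)]) := by
  ext i j
  fin_cases i <;> fin_cases j <;> simp [phiMat, phiS, castVec]

lemma unit1 (a b : ℚ) (ha : 0 < a) (hnsa : ¬ IsSquare a) (Λ : Subgroup SL2R)
    (hΛ : (Λ : Set SL2R) = {g : SL2R | ∃ x₀ x₁ x₂ x₃ : ℤ,
      (x₀ : ℚ) ^ 2 - a * x₁ ^ 2 - b * x₂ ^ 2 + a * b * x₃ ^ 2 = 1 ∧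
      (g : Matrix (Fin 2) (Fin 2) ℝ) = phiMat a b x₀ x₁ x₂ x₃}) :
    ∃ u : SL2R, u ∈ Λ ∧ ∀ k : ℕ, k ≠ 0 → ∃ A0 A1 : ℚ,
      ((u ^ k : SL2R) : Matrix (Fin 2) (Fin 2) ℝ)
        = phiS (b : ℝ) (Real.sqrt a) (castVec ![A0, A1, 0, 0]) ∧ A1 ≠ 0 := by
  obtain ⟨x, y, hxy, hy⟩ := pell_rat a ha hnsa
  have haR : (0:ℝ) < (a:ℝ) := by exact_mod_cast ha
  set s := Real.sqrt (a : ℝ) with hsdef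
  have hs2 : s * s = (a : ℝ) := Real.mul_self_sqrt haR.le
  have hs0 : s ≠ 0 := ne_of_gt (Real.sqrt_pos.mpr haR)
  have hcR : (x:ℝ)^2 - (a:ℝ)*(y:ℝ)^2 = 1 := by exact_mod_cast hxy
  have hdet : (phiMat a b x y 0 0).det = 1 := by
    rw [phiMat_eq_phiS, det_phiS]
    simp [castVec, hs2, Real.mul_self_sqrt haR.le]
    exact_mod_cast hxy
  set u : SL2R := ⟨phiMat a b x y 0 0, hdet⟩ with hudef
  have humem : u ∈ Λ := by
    rw [← SetLike.mem_coe, hΛ]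
    exact ⟨x, y, 0, 0, by push_cast; linear_combination hxy, rfl⟩
  refine ⟨u, humem, ?_⟩
  intro k hk
  have hαδ : ((x:ℝ) + (y:ℝ)*s) * ((x:ℝ) - (y:ℝ)*s) = 1 := by
    linear_combination hcR - (y:ℝ)^2 * hs2
  have hαδne : (x:ℝ) + (y:ℝ)*s ≠ (x:ℝ) - (y:ℝ)*s := by
    intro h
    have hys : (y:ℝ) * s = 0 := by linarith
    rcases mul_eq_zero.mp hys with h' | h'
    · exact hy (by exact_mod_cast h')
    · exact hs0 h'
  have hpow : ((u ^ k : SL2R) : Matrix (Fin 2) (Fin 2) ℝ)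
      = !![((x:ℝ) + (y:ℝ)*s)^k, 0; 0, ((x:ℝ) - (y:ℝ)*s)^k] := by
    rw [Matrix.SpecialLinearGroup.coe_pow]
    have hmu : (u : Matrix (Fin 2) (Fin 2) ℝ) = !![(x:ℝ) + (y:ℝ)*s, 0; 0, (x:ℝ) - (y:ℝ)*s] := by
      show phiMat a b x y 0 0 = _
      ext i j; fin_cases i <;> fin_cases j <;> simp [phiMat, hsdef]
    rw [hmu, diag_pow]
  have hkrep : u ^ k ∈ (Λ : Set SL2R) := pow_mem humem k
  rw [hΛ] at hkrep
  obtain ⟨z0, z1, z2, z3, hznorm, hzrep⟩ := hkrep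
  rw [phiMat_eq_phiS] at hzrep
  have hE := hzrep.symm.trans hpow
  have h00 := congrFun (congrFun hE 0) 0
  have h01 := congrFun (congrFun hE 0) 1
  have h11 := congrFun (congrFun hE 1) 1
  simp [phiS, castVec] at h00 h01 h11
  have h23 : (z2 : ℚ) = 0 ∧ (z3 : ℚ) = 0 := by
    apply sqrt_rat_comb ha hnsa
    push_cast
    exact h01
  have hz1 : (z1:ℚ) ≠ 0 := by
    intro h0
    have hz1R : (z1:ℝ) = 0 := by exact_mod_cast h0
    apply pow_ne_pow_of_mul_one hαδ hαδne hk
    rw [← h00, ← h11, hz1R]; ring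
  refine ⟨(z0:ℚ), (z1:ℚ), ?_, hz1⟩
  rw [hzrep]
  congr 1
  funext i
  fin_cases i <;> simp [castVec, h23.1, h23.2]

lemma unit2 (a b : ℚ) (ha : 0 < a)
    (hdiv : ∀ y₀ y₁ y₂ y₃ : ℚ,
      y₀ ^ 2 - a * y₁ ^ 2 - b * y₂ ^ 2 + a * b * y₃ ^ 2 = 0 →
      y₀ = 0 ∧ y₁ = 0 ∧ y₂ = 0 ∧ y₃ = 0)
    (Λ : Subgroup SL2R)
    (hΛ : (Λ : Set SL2R) = {g : SL2R | ∃ x₀ x₁ x₂ x₃ : ℤ,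
      (x₀ : ℚ) ^ 2 - a * x₁ ^ 2 - b * x₂ ^ 2 + a * b * x₃ ^ 2 = 1 ∧
      (g : Matrix (Fin 2) (Fin 2) ℝ) = phiMat a b x₀ x₁ x₂ x₃}) :
    ∃ u : SL2R, u ∈ Λ ∧ ∀ k : ℕ, k ≠ 0 → ∃ B0 B2 B3 : ℚ,
      ((u ^ k : SL2R) : Matrix (Fin 2) (Fin 2) ℝ)
        = phiS (b : ℝ) (Real.sqrt a) (castVec ![B0, 0, B2, B3]) ∧ ¬ (B2 = 0 ∧ B3 = 0) := by
  have hbne : b ≠ 0 := by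
    intro hb0
    obtain ⟨_, _, h2, _⟩ := hdiv 0 0 1 0 (by rw [hb0]; ring)
    exact one_ne_zero h2
  have haR : (0:ℝ) < (a:ℝ) := by exact_mod_cast ha
  set s := Real.sqrt (a : ℝ) with hsdef
  have hs2 : s * s = (a : ℝ) := Real.mul_self_sqrt haR.le
  have hs0 : s ≠ 0 := ne_of_gt (Real.sqrt_pos.mpr haR)
  rcases hbne.lt_or_gt with hbneg | hbpos
  · -- b < 0 : use the ωΩ-plane, Pell for -(a*b)
    have hq0 : (0:ℚ) < -(a*b) := by nlinarith
    have hnsq : ¬ IsSquare (-(a*b)) := by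
      rintro ⟨e, he⟩
      obtain ⟨_, _, _, h3⟩ := hdiv e 0 0 1 (by nlinarith [he])
      exact one_ne_zero h3
    obtain ⟨x, y, hxy, hy⟩ := pell_rat (-(a*b)) hq0 hnsq
    have hcR : (x:ℝ)^2 + (a:ℝ)*(b:ℝ)*(y:ℝ)^2 = 1 := by
      have : (x:ℚ)^2 + (a*b) * (y:ℚ)^2 = 1 := by linear_combination hxy
      exact_mod_cast this
    have hdet : (phiMat a b x 0 0 y).det = 1 := by
      rw [phiMat_eq_phiS, det_phiS]
      simp [castVec, hs2, Real.mul_self_sqrt haR.le]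
      exact_mod_cast hcR
    set u : SL2R := ⟨phiMat a b x 0 0 y, hdet⟩ with hudef
    have humem : u ∈ Λ := by
      rw [← SetLike.mem_coe, hΛ]
      exact ⟨x, 0, 0, y, by push_cast; linear_combination hxy, rfl⟩
    refine ⟨u, humem, ?_⟩
    intro k hk
    have hbR : (0:ℝ) < -(b:ℝ) := by exact_mod_cast neg_pos.mpr hbneg
    set w := Real.sqrt (-(b:ℝ)) with hwdef
    have hw2 : w * w = -(b:ℝ) := Real.mul_self_sqrt hbR.le
    have hw0 : w ≠ 0 := ne_of_gt (Real.sqrt_pos.mpr hbR)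
    obtain ⟨S', T', hm, hp, hq⟩ := Mc_pow (-(b:ℝ)) w (x:ℝ) ((y:ℝ)*s) hw2 k
    have hpow : ((u ^ k : SL2R) : Matrix (Fin 2) (Fin 2) ℝ)
        = !![S', T'; (-(b:ℝ)) * T', S'] := by
      rw [Matrix.SpecialLinearGroup.coe_pow]
      have hmu : (u : Matrix (Fin 2) (Fin 2) ℝ)
          = !![(x:ℝ), (y:ℝ)*s; (-(b:ℝ)) * ((y:ℝ)*s), (x:ℝ)] := by
        show phiMat a b x 0 0 y = _
        ext i j; fin_cases i <;> fin_cases j <;> simp [phiMat, hsdef] <;> ring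
      rw [hmu, ← hm]
    have hβγ : ((x:ℝ) + ((y:ℝ)*s)*w) * ((x:ℝ) - ((y:ℝ)*s)*w) = 1 := by
      linear_combination hcR - ((y:ℝ)^2 * (w*w)) * hs2 - ((a:ℝ)*(y:ℝ)^2) * hw2
    have hβγne : (x:ℝ) + ((y:ℝ)*s)*w ≠ (x:ℝ) - ((y:ℝ)*s)*w := by
      intro h
      have hys : (y:ℝ) * s * w = 0 := by linarith
      rcases mul_eq_zero.mp hys with h' | h'
      · rcases mul_eq_zero.mp h' with h'' | h''
        · exact hy (by exact_mod_cast h'')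
        · exact hs0 h''
      · exact hw0 h'
    have hT' : T' ≠ 0 := by
      intro h0
      apply pow_ne_pow_of_mul_one hβγ hβγne hk
      rw [← hp, ← hq, h0]; ring
    have hkrep : u ^ k ∈ (Λ : Set SL2R) := pow_mem humem k
    rw [hΛ] at hkrep
    obtain ⟨z0, z1, z2, z3, hznorm, hzrep⟩ := hkrep
    rw [phiMat_eq_phiS] at hzrep
    have hE := hzrep.symm.trans hpow
    have h00 := congrFun (congrFun hE 0) 0
    have h01 := congrFun (congrFun hE 0) 1
    have h11 := congrFun (congrFun hE 1) 1
    simp [phiS, castVec] at h00 h01 h11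
    have hz1 : (z1:ℚ) = 0 := by
      have : (z1:ℝ) * s = 0 := by linarith
      rcases mul_eq_zero.mp this with h' | h'
      · exact_mod_cast h'
      · exact absurd h' hs0
    have hz23 : ¬ ((z2:ℚ) = 0 ∧ (z3:ℚ) = 0) := by
      rintro ⟨hz2, hz3⟩
      have hz2R : (z2:ℝ) = 0 := by exact_mod_cast hz2
      have hz3R : (z3:ℝ) = 0 := by exact_mod_cast hz3
      rw [hz2R, hz3R] at h01
      apply hT'
      simpa using h01.symm
    refine ⟨(z0:ℚ), (z2:ℚ), (z3:ℚ), ?_, hz23⟩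
    rw [hzrep]
    congr 1
    funext i
    fin_cases i <;> simp [castVec, hz1]
  · -- b > 0 : use the Ω-plane, Pell for b
    have hnsb : ¬ IsSquare b := by
      rintro ⟨e, he⟩
      obtain ⟨_, _, h2, _⟩ := hdiv e 0 1 0 (by rw [he]; ring)
      exact one_ne_zero h2
    obtain ⟨x, y, hxy, hy⟩ := pell_rat b hbpos hnsb
    have hcR : (x:ℝ)^2 - (b:ℝ)*(y:ℝ)^2 = 1 := by exact_mod_cast hxy
    have hdet : (phiMat a b x 0 y 0).det = 1 := by
      rw [phiMat_eq_phiS, det_phiS]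
      simp [castVec, hs2]
      exact_mod_cast hxy
    set u : SL2R := ⟨phiMat a b x 0 y 0, hdet⟩ with hudef
    have humem : u ∈ Λ := by
      rw [← SetLike.mem_coe, hΛ]
      exact ⟨x, 0, y, 0, by push_cast; linear_combination hxy, rfl⟩
    refine ⟨u, humem, ?_⟩
    intro k hk
    have hbR : (0:ℝ) < (b:ℝ) := by exact_mod_cast hbpos
    set w := Real.sqrt ((b:ℝ)) with hwdef
    have hw2 : w * w = (b:ℝ) := Real.mul_self_sqrt hbR.le
    have hw0 : w ≠ 0 := ne_of_gt (Real.sqrt_pos.mpr hbR)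
    obtain ⟨S', T', hm, hp, hq⟩ := Mc_pow ((b:ℝ)) w (x:ℝ) (y:ℝ) hw2 k
    have hpow : ((u ^ k : SL2R) : Matrix (Fin 2) (Fin 2) ℝ)
        = !![S', T'; (b:ℝ) * T', S'] := by
      rw [Matrix.SpecialLinearGroup.coe_pow]
      have hmu : (u : Matrix (Fin 2) (Fin 2) ℝ)
          = !![(x:ℝ), (y:ℝ); (b:ℝ) * (y:ℝ), (x:ℝ)] := by
        show phiMat a b x 0 y 0 = _
        ext i j; fin_cases i <;> fin_cases j <;> simp [phiMat]
      rw [hmu, ← hm]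
    have hβγ : ((x:ℝ) + (y:ℝ)*w) * ((x:ℝ) - (y:ℝ)*w) = 1 := by
      linear_combination hcR - (y:ℝ)^2 * hw2
    have hβγne : (x:ℝ) + (y:ℝ)*w ≠ (x:ℝ) - (y:ℝ)*w := by
      intro h
      have hys : (y:ℝ) * w = 0 := by linarith
      rcases mul_eq_zero.mp hys with h' | h'
      · exact hy (by exact_mod_cast h')
      · exact hw0 h'
    have hT' : T' ≠ 0 := by
      intro h0
      apply pow_ne_pow_of_mul_one hβγ hβγne hk
      rw [← hp, ← hq, h0]; ring
    have hkrep : u ^ k ∈ (Λ : Set SL2R) := pow_mem humem k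
    rw [hΛ] at hkrep
    obtain ⟨z0, z1, z2, z3, hznorm, hzrep⟩ := hkrep
    rw [phiMat_eq_phiS] at hzrep
    have hE := hzrep.symm.trans hpow
    have h00 := congrFun (congrFun hE 0) 0
    have h01 := congrFun (congrFun hE 0) 1
    have h11 := congrFun (congrFun hE 1) 1
    simp [phiS, castVec] at h00 h01 h11
    have hz1 : (z1:ℚ) = 0 := by
      have : (z1:ℝ) * s = 0 := by linarith
      rcases mul_eq_zero.mp this with h' | h'
      · exact_mod_cast h'
      · exact absurd h' hs0
    have hz23 : ¬ ((z2:ℚ) = 0 ∧ (z3:ℚ) = 0) := by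
      rintro ⟨hz2, hz3⟩
      have hz2R : (z2:ℝ) = 0 := by exact_mod_cast hz2
      have hz3R : (z3:ℝ) = 0 := by exact_mod_cast hz3
      rw [hz2R, hz3R] at h01
      apply hT'
      simpa using h01.symm
    refine ⟨(z0:ℚ), (z2:ℚ), (z3:ℚ), ?_, hz23⟩
    rw [hzrep]
    congr 1
    funext i
    fin_cases i <;> simp [castVec, hz1]

lemma map_mul_cast {n : ℕ} (M N : Matrix (Fin n) (Fin n) ℚ) :
    (M * N).map ((↑):ℚ→ℝ) = M.map ((↑):ℚ→ℝ) * N.map ((↑):ℚ→ℝ) := by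
  ext i j
  simp [Matrix.map_apply, Matrix.mul_apply]


lemma det_map_cast {n : ℕ} (M : Matrix (Fin n) (Fin n) ℚ) :
    (M.map ((↑):ℚ→ℝ)).det = ((M.det : ℚ) : ℝ) :=
  (RingHom.map_det (Rat.castHom ℝ) M).symm

lemma mem_conjSubgroup {g x : SL2R} {Γ : Subgroup SL2R} :
    x ∈ conjSubgroup g Γ ↔ g * x * g⁻¹ ∈ Γ := by
  simp only [conjSubgroup, Subgroup.mem_map, MulEquiv.coe_toMonoidHom, MulAut.conj_apply, inv_inv]
  constructor
  · rintro ⟨y, hy, rfl⟩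
    convert hy using 1
    group
  · intro h
    exact ⟨g * x * g⁻¹, h, by group⟩

lemma conjSubgroup_eq_smul (g : SL2R) (Γ : Subgroup SL2R) :
    conjSubgroup g Γ = (ConjAct.toConjAct g⁻¹) • Γ := by
  ext x
  rw [mem_conjSubgroup, Subgroup.mem_pointwise_smul_iff_inv_smul_mem]
  simp only [ConjAct.smul_def, ConjAct.ofConjAct_inv, ConjAct.ofConjAct_toConjAct, inv_inv]

lemma conjSubgroup_one (Γ : Subgroup SL2R) : conjSubgroup 1 Γ = Γ := by
  ext x; rw [mem_conjSubgroup]; simp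

lemma conj_cols (gm gi : Matrix (Fin 2) (Fin 2) ℝ) (b s : ℝ)
    (M N : Matrix (Fin 4) (Fin 4) ℚ)
    (h : ∀ j, gm * phiS b s (castVec (fun i => M i j)) * gi
            = phiS b s (castVec (fun i => N i j)))
    (x : Fin 4 → ℝ) :
    gm * phiS b s ((M.map ((↑) : ℚ → ℝ)).mulVec x) * gi
      = phiS b s ((N.map ((↑) : ℚ → ℝ)).mulVec x) := by
  have hM : ∀ (P : Matrix (Fin 4) (Fin 4) ℚ),
      (P.map ((↑) : ℚ → ℝ)).mulVec x
        = x 0 • castVec (fun i => P i 0) + x 1 • castVec (fun i => P i 1)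
          + x 2 • castVec (fun i => P i 2) + x 3 • castVec (fun i => P i 3) := by
    intro P
    funext i
    simp [Matrix.mulVec, dotProduct, Fin.sum_univ_four, castVec, Matrix.map_apply]
    ring
  rw [hM M, hM N, phiS_comb, phiS_comb]
  simp only [Matrix.mul_add, Matrix.add_mul, Matrix.mul_smul, Matrix.smul_mul]
  rw [h 0, h 1, h 2, h 3]

end BSZAux

open Matrix BSZAux in
theorem correlator_trivial_cocompact_arithmetic (a b : ℚ) (ha : 0 < a)
    (hdiv : ∀ y₀ y₁ y₂ y₃ : ℚ,
      y₀ ^ 2 - a * y₁ ^ 2 - b * y₂ ^ 2 + a * b * y₃ ^ 2 = 0 →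
      y₀ = 0 ∧ y₁ = 0 ∧ y₂ = 0 ∧ y₃ = 0)
    (Γ Λ : Subgroup SL2R)
    (hΛ : (Λ : Set SL2R) = {g : SL2R | ∃ x₀ x₁ x₂ x₃ : ℤ,
      (x₀ : ℚ) ^ 2 - a * x₁ ^ 2 - b * x₂ ^ 2 + a * b * x₃ ^ 2 = 1 ∧
      (g : Matrix (Fin 2) (Fin 2) ℝ) = phiMat a b x₀ x₁ x₂ x₃})
    (hcomm : Γ.relIndex Λ ≠ 0 ∧ Λ.relIndex Γ ≠ 0)
    (v : Fin 2 → ℝ) (hv : v ≠ 0) :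
    {r : ℚ | ∃ g ∈ commenSet Γ, ∃ c : ℝ,
      (g : Matrix (Fin 2) (Fin 2) ℝ).mulVec v = c • v ∧ (r : ℝ) = c ^ 2} = {1} := by
  obtain ⟨hcomm1, hcomm2⟩ := hcomm
  ext r
  simp only [Set.mem_setOf_eq, Set.mem_singleton_iff]
  constructor
  · rintro ⟨g, ⟨hg1, hg2⟩, c, hvec, hrR⟩
    by_contra hrne
    -- basic setup
    have haR : (0:ℝ) < (a:ℝ) := by exact_mod_cast ha
    set s := Real.sqrt (a:ℝ) with hsdef
    have hs2 : s * s = (a:ℝ) := Real.mul_self_sqrt haR.le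
    have hs0 : s ≠ 0 := ne_of_gt (Real.sqrt_pos.mpr haR)
    have hbne : b ≠ 0 := by
      intro hb0
      obtain ⟨_, _, h2, _⟩ := hdiv 0 0 1 0 (by rw [hb0]; ring)
      exact one_ne_zero h2
    have hbR : (b:ℝ) ≠ 0 := by exact_mod_cast hbne
    have hnsa : ¬ IsSquare a := by
      rintro ⟨e, he⟩
      obtain ⟨_, h1, _, _⟩ := hdiv e 1 0 0 (by rw [he]; ring)
      exact one_ne_zero h1
    set gm : Matrix (Fin 2) (Fin 2) ℝ := (g : Matrix (Fin 2) (Fin 2) ℝ) with hgmdef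
    set gi : Matrix (Fin 2) (Fin 2) ℝ := ((g⁻¹ : SL2R) : Matrix (Fin 2) (Fin 2) ℝ) with hgidef
    have hgmgi : gm * gi = 1 := by
      rw [hgmdef, hgidef, ← Matrix.SpecialLinearGroup.coe_mul, mul_inv_cancel,
        Matrix.SpecialLinearGroup.coe_one]
    have hgigm : gi * gm = 1 := by
      rw [hgmdef, hgidef, ← Matrix.SpecialLinearGroup.coe_mul, inv_mul_cancel,
        Matrix.SpecialLinearGroup.coe_one]
    have hc0 : c ≠ 0 := by
      intro h0
      apply hv
      have hz : gm *ᵥ v = 0 := by rw [hvec, h0, zero_smul]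
      have h1 : gi *ᵥ (gm *ᵥ v) = v := by
        rw [Matrix.mulVec_mulVec, hgigm, Matrix.one_mulVec]
      rw [hz, Matrix.mulVec_zero] at h1
      exact h1.symm
    have hrpos : 0 < r := by
      have h2 : c^2 ≠ 0 := pow_ne_zero 2 hc0
      have h1 : (0:ℝ) < (r:ℝ) := by
        rw [hrR]; exact lt_of_le_of_ne (sq_nonneg c) (Ne.symm h2)
      exact_mod_cast h1
    have hr2 : (1:ℚ) - r^2 ≠ 0 := by
      intro h
      have hfac : (r-1)*(r+1) = 0 := by linear_combination -h
      rcases mul_eq_zero.mp hfac with h' | h'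
      · exact hrne (by linarith)
      · nlinarith [hrpos]
    -- commensurability transfer
    have hΓΛ : Subgroup.Commensurable Γ Λ := ⟨hcomm1, hcomm2⟩
    have hgΛ : (conjSubgroup g Λ).relIndex Λ ≠ 0 := by
      have h3 : Subgroup.Commensurable (conjSubgroup g Λ) (conjSubgroup g Γ) := by
        rw [conjSubgroup_eq_smul, conjSubgroup_eq_smul]
        exact (Subgroup.Commensurable.commensurable_conj (ConjAct.toConjAct g⁻¹)).mp hΓΛ.symm
      exact ((h3.trans ⟨hg1, hg2⟩).trans hΓΛ).1
    -- units and their powers inside the intersection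
    obtain ⟨u, huΛ, hu⟩ := unit1 a b ha hnsa Λ hΛ
    obtain ⟨u', hu'Λ, hu'⟩ := unit2 a b ha hdiv Λ hΛ
    obtain ⟨k1, hk1pos, _, hk1mem⟩ := Subgroup.exists_pow_mem_of_relIndex_ne_zero hgΛ huΛ
    obtain ⟨k2, hk2pos, _, hk2mem⟩ := Subgroup.exists_pow_mem_of_relIndex_ne_zero hgΛ hu'Λ
    obtain ⟨A0, A1, hW1, hA1⟩ := hu k1 hk1pos.ne'
    obtain ⟨B0, B2, B3, hW2, hB⟩ := hu' k2 hk2pos.ne'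
    have hl1 : g * u ^ k1 * g⁻¹ ∈ Λ := mem_conjSubgroup.mp (Subgroup.mem_inf.mp hk1mem).1
    have hl2 : g * u' ^ k2 * g⁻¹ ∈ Λ := mem_conjSubgroup.mp (Subgroup.mem_inf.mp hk2mem).1
    have hl1' : g * u ^ k1 * g⁻¹ ∈ (Λ : Set SL2R) := hl1
    have hl2' : g * u' ^ k2 * g⁻¹ ∈ (Λ : Set SL2R) := hl2
    rw [hΛ] at hl1' hl2'
    obtain ⟨m0, m1, m2, m3, hmnorm, hmrep⟩ := hl1'
    obtain ⟨n0, n1, n2, n3, hnnorm, hnrep⟩ := hl2'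
    rw [phiMat_eq_phiS] at hmrep hnrep
    set Aq : Fin 4 → ℚ := ![A0, A1, 0, 0] with hAqdef
    set Bq : Fin 4 → ℚ := ![B0, 0, B2, B3] with hBqdef
    set mQ : Fin 4 → ℚ := ![(m0:ℚ), (m1:ℚ), (m2:ℚ), (m3:ℚ)] with hmQdef
    set nQ : Fin 4 → ℚ := ![(n0:ℚ), (n1:ℚ), (n2:ℚ), (n3:ℚ)] with hnQdef
    -- matrix-level conjugation facts for the generators
    have hcoe1 : gm * ((u ^ k1 : SL2R) : Matrix (Fin 2) (Fin 2) ℝ) * gi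
        = ((g * u ^ k1 * g⁻¹ : SL2R) : Matrix (Fin 2) (Fin 2) ℝ) := by
      rw [Matrix.SpecialLinearGroup.coe_mul, Matrix.SpecialLinearGroup.coe_mul]
    have hcoe2 : gm * ((u' ^ k2 : SL2R) : Matrix (Fin 2) (Fin 2) ℝ) * gi
        = ((g * u' ^ k2 * g⁻¹ : SL2R) : Matrix (Fin 2) (Fin 2) ℝ) := by
      rw [Matrix.SpecialLinearGroup.coe_mul, Matrix.SpecialLinearGroup.coe_mul]
    have hW1' : gm * phiS (b:ℝ) s (castVec Aq) * gi = phiS (b:ℝ) s (castVec mQ) := by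
      rw [← hW1, hcoe1, hmrep]
    have hW2' : gm * phiS (b:ℝ) s (castVec Bq) * gi = phiS (b:ℝ) s (castVec nQ) := by
      rw [← hW2, hcoe2, hnrep]
    have hconjmul : ∀ P1 P2 : Matrix (Fin 2) (Fin 2) ℝ,
        (gm * P1 * gi) * (gm * P2 * gi) = gm * (P1 * P2) * gi := by
      intro P1 P2
      calc (gm * P1 * gi) * (gm * P2 * gi)
          = gm * P1 * (gi * gm) * (P2 * gi) := by simp only [Matrix.mul_assoc]
        _ = gm * (P1 * P2) * gi := by rw [hgigm]; simp only [Matrix.mul_assoc, Matrix.mul_one,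
            Matrix.one_mul]
    have hW3' : gm * phiS (b:ℝ) s (castVec (qmulQ a b Aq Bq)) * gi
        = phiS (b:ℝ) s (castVec (qmulQ a b mQ nQ)) := by
      have e1 : phiS (b:ℝ) s (castVec (qmulQ a b Aq Bq))
          = phiS (b:ℝ) s (castVec Aq) * phiS (b:ℝ) s (castVec Bq) := by
        rw [castVec_qmul, phiS_mul, hs2]
      have e2 : phiS (b:ℝ) s (castVec (qmulQ a b mQ nQ))
          = phiS (b:ℝ) s (castVec mQ) * phiS (b:ℝ) s (castVec nQ) := by
        rw [castVec_qmul, phiS_mul, hs2]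
      rw [e1, e2, ← hW1', ← hW2', hconjmul]
    set e0q : Fin 4 → ℚ := ![1, 0, 0, 0] with he0qdef
    have hW0' : gm * phiS (b:ℝ) s (castVec e0q) * gi = phiS (b:ℝ) s (castVec e0q) := by
      rw [he0qdef, phiS_e0, Matrix.mul_one, hgmgi]
    set colsM : Fin 4 → Fin 4 → ℚ := ![e0q, Aq, Bq, qmulQ a b Aq Bq] with hcolsMdef
    set colsN : Fin 4 → Fin 4 → ℚ := ![e0q, mQ, nQ, qmulQ a b mQ nQ] with hcolsNdef
    set Mgen : Matrix (Fin 4) (Fin 4) ℚ := Matrix.of (fun i j => colsM j i) with hMgendef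
    set Ngen : Matrix (Fin 4) (Fin 4) ℚ := Matrix.of (fun i j => colsN j i) with hNgendef
    have hcols : ∀ j, gm * phiS (b:ℝ) s (castVec (fun i => Mgen i j)) * gi
        = phiS (b:ℝ) s (castVec (fun i => Ngen i j)) := by
      intro j
      have hMj : (fun i => Mgen i j) = colsM j := rfl
      have hNj : (fun i => Ngen i j) = colsN j := rfl
      rw [hMj, hNj]
      fin_cases j
      · exact hW0'
      · exact hW1'
      · exact hW2'
      · exact hW3'
    -- determinant of the generator matrix
    have hD : B2^2 - a*B3^2 ≠ 0 := by
      intro h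
      rcases eq_or_ne B3 0 with h3 | h3
      · apply hB
        refine ⟨?_, h3⟩
        have hB2 : B2^2 = 0 := by rw [h3] at h; simpa using h
        exact pow_eq_zero_iff (n := 2) (by norm_num) |>.mp hB2
      · apply hnsa
        exact ⟨B2/B3, by field_simp; linear_combination -h⟩
    have hMdet : Mgen.det = A1^2 * (B2^2 - a*B3^2) := by
      rw [hMgendef]
      simp [Matrix.det_succ_row_zero, Fin.sum_univ_succ, hcolsMdef, he0qdef, hAqdef, hBqdef,
        qmulQ]
      ring
    have hMdet0 : Mgen.det ≠ 0 := by
      rw [hMdet]; exact mul_ne_zero (pow_ne_zero 2 hA1) hD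
    set Tq : Matrix (Fin 4) (Fin 4) ℚ := Ngen * Mgen⁻¹ with hTqdef
    have hTqM : Tq * Mgen = Ngen := by
      rw [hTqdef, Matrix.mul_assoc, Matrix.nonsing_inv_mul Mgen (isUnit_iff_ne_zero.mpr hMdet0),
        Matrix.mul_one]
    have hTRM : (Tq.map ((↑):ℚ→ℝ)) * (Mgen.map ((↑):ℚ→ℝ)) = Ngen.map ((↑):ℚ→ℝ) := by
      rw [← map_mul_cast, hTqM]
    have hMRdet : ((Mgen.map ((↑):ℚ→ℝ)).det) ≠ 0 := by
      rw [det_map_cast]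
      exact_mod_cast hMdet0
    have hT : ∀ zv : Fin 4 → ℝ,
        gm * phiS (b:ℝ) s zv * gi = phiS (b:ℝ) s ((Tq.map ((↑):ℚ→ℝ)).mulVec zv) := by
      intro zv
      have hMunitR : IsUnit (Mgen.map ((↑):ℚ→ℝ)).det := isUnit_iff_ne_zero.mpr hMRdet
      have h1 : (Mgen.map ((↑):ℚ→ℝ)).mulVec ((Mgen.map ((↑):ℚ→ℝ))⁻¹.mulVec zv) = zv := by
        rw [Matrix.mulVec_mulVec, Matrix.mul_nonsing_inv _ hMunitR, Matrix.one_mulVec]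
      have h2 := conj_cols gm gi (b:ℝ) s Mgen Ngen hcols ((Mgen.map ((↑):ℚ→ℝ))⁻¹.mulVec zv)
      rw [h1] at h2
      rw [h2]
      have h3 : (Tq.map ((↑):ℚ→ℝ)).mulVec zv
          = (Ngen.map ((↑):ℚ→ℝ)).mulVec ((Mgen.map ((↑):ℚ→ℝ))⁻¹.mulVec zv) := by
        conv_lhs => rw [← h1]
        rw [Matrix.mulVec_mulVec, hTRM]
      rw [h3]
    -- the eigen-matrix N
    have hdetg : gm.det = 1 := g.prop
    have hdetgi : gi.det = 1 := (g⁻¹).prop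
    have hchar0 : (gm - c • 1).det = 0 := by
      rw [← Matrix.exists_mulVec_eq_zero_iff]
      exact ⟨v, hv, by rw [Matrix.sub_mulVec, Matrix.smul_mulVec, Matrix.one_mulVec,
        hvec, sub_self]⟩
    have htr : c^2 - (gm 0 0 + gm 1 1) * c + 1 = 0 := by
      have h := det_sub_smul gm c
      rw [hchar0, hdetg] at h
      linarith [h]
    have hchar1 : ((gm)ᵀ - c⁻¹ • 1).det = 0 := by
      have htrans : (gm - c⁻¹ • 1)ᵀ = gmᵀ - c⁻¹ • 1 := by
        rw [Matrix.transpose_sub, Matrix.transpose_smul, Matrix.transpose_one]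
      rw [← htrans, Matrix.det_transpose, det_sub_smul gm c⁻¹, hdetg]
      field_simp
      linear_combination htr
    obtain ⟨w, hw0, hww⟩ := Matrix.exists_mulVec_eq_zero_iff.mpr hchar1
    rw [Matrix.sub_mulVec, Matrix.smul_mulVec, Matrix.one_mulVec] at hww
    have hwg : w ᵥ* gm = c⁻¹ • w := by
      rw [← Matrix.mulVec_transpose]
      exact sub_eq_zero.mp hww
    have hwgi : w ᵥ* gi = c • w := by
      have h1 : (w ᵥ* gm) ᵥ* gi = w := by rw [Matrix.vecMul_vecMul, hgmgi, Matrix.vecMul_one]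
      rw [hwg, Matrix.smul_vecMul, inv_smul_eq_iff₀ hc0] at h1
      exact h1
    set NN := vecMulVec v w with hNNdef
    have hN0 : NN ≠ 0 := by
      obtain ⟨i, hi⟩ := Function.ne_iff.mp hv
      obtain ⟨j, hj⟩ := Function.ne_iff.mp hw0
      intro h
      have h2 : v i * w j = 0 := by
        simpa [hNNdef, Matrix.vecMulVec_apply] using congrFun (congrFun h i) j
      rcases mul_eq_zero.mp h2 with h' | h'
      · exact hi (by simpa using h')
      · exact hj (by simpa using h')
    have hNconj : gm * NN * gi = (r:ℝ) • NN := by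
      rw [hNNdef, conj_vecMulVec, hvec, hwgi, vecMulVec_smul_smul,
        show c * c = (r:ℝ) from by rw [hrR]; ring]
    set z : Fin 4 → ℝ := ![(NN 0 0 + NN 1 1)/2, (NN 0 0 - NN 1 1)/(2*s),
      (NN 0 1 + NN 1 0/(b:ℝ))/2, (NN 0 1 - NN 1 0/(b:ℝ))/(2*s)] with hzdef
    have hphz : phiS (b:ℝ) s z = NN := by
      ext i j
      fin_cases i <;> fin_cases j <;> (simp [phiS, hzdef]; field_simp; ring)
    have hz0 : z ≠ 0 := by
      intro h
      apply hN0
      rw [← hphz, h, phiS_zero]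
    have hTz : (Tq.map ((↑):ℚ→ℝ)).mulVec z = (r:ℝ) • z := by
      apply phiS_inj hbR hs0
      rw [phiS_smul, ← hT z, hphz, hNconj]
    -- rational kernel vector
    have hmapeq : (Tq - (r:ℚ) • 1).map ((↑):ℚ→ℝ) = Tq.map ((↑):ℚ→ℝ) - (r:ℝ) • 1 := by
      ext i j
      by_cases hij : i = j
      · simp [Matrix.map_apply, Matrix.sub_apply, Matrix.smul_apply, Matrix.one_apply, hij]
      · simp [Matrix.map_apply, Matrix.sub_apply, Matrix.smul_apply, Matrix.one_apply, hij]
    have hdetT0 : (Tq - (r:ℚ) • 1).det = 0 := by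
      have hdetR : ((Tq.map ((↑):ℚ→ℝ)) - (r:ℝ) • 1).det = 0 := by
        rw [← Matrix.exists_mulVec_eq_zero_iff]
        exact ⟨z, hz0, by rw [Matrix.sub_mulVec, Matrix.smul_mulVec, Matrix.one_mulVec,
          hTz, sub_self]⟩
      have h := det_map_cast (Tq - (r:ℚ) • 1)
      rw [hmapeq, hdetR] at h
      exact_mod_cast h.symm
    obtain ⟨yq, hyq0, hyqker⟩ := Matrix.exists_mulVec_eq_zero_iff.mpr hdetT0
    rw [Matrix.sub_mulVec, Matrix.smul_mulVec, Matrix.one_mulVec] at hyqker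
    have hyqe : Tq.mulVec yq = (r:ℚ) • yq := sub_eq_zero.mp hyqker
    -- the quaternion with zero norm
    have hcastmv : (Tq.map ((↑):ℚ→ℝ)).mulVec (castVec yq) = castVec (Tq.mulVec yq) := by
      funext i
      simp [Matrix.mulVec, dotProduct, castVec, Matrix.map_apply, Fin.sum_univ_four]
    have hpconj : gm * phiS (b:ℝ) s (castVec yq) * gi = (r:ℝ) • phiS (b:ℝ) s (castVec yq) := by
      rw [hT (castVec yq), hcastmv, hyqe, castVec_smul, phiS_smul]
    have hdetp : (phiS (b:ℝ) s (castVec yq)).det = 0 := by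
      have h1 : (gm * phiS (b:ℝ) s (castVec yq) * gi).det = (phiS (b:ℝ) s (castVec yq)).det := by
        rw [Matrix.det_mul, Matrix.det_mul, hdetg, hdetgi]
        ring
      rw [hpconj, Matrix.det_smul] at h1
      have hfac : ((1:ℝ) - (r:ℝ)^2) * (phiS (b:ℝ) s (castVec yq)).det = 0 := by
        simp at h1
        linear_combination -h1
      rcases mul_eq_zero.mp hfac with h' | h'
      · exact absurd h' (by exact_mod_cast hr2)
      · exact h'
    have hnorm0 : (yq 0)^2 - a*(yq 1)^2 - b*(yq 2)^2 + a*b*(yq 3)^2 = 0 := by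
      have h := hdetp
      rw [det_phiS, hs2] at h
      have h2 : (((yq 0)^2 - a*(yq 1)^2 - b*(yq 2)^2 + a*b*(yq 3)^2 : ℚ) : ℝ) = 0 := by
        push_cast
        convert h using 1
        rfl
      exact_mod_cast h2
    obtain ⟨h0', h1', h2', h3'⟩ := hdiv _ _ _ _ hnorm0
    apply hyq0
    funext i
    fin_cases i
    · exact h0'
    · exact h1'
    · exact h2'
    · exact h3'
  · rintro rfl
    refine ⟨1, ⟨?_, ?_⟩, 1, ?_, ?_⟩
    · rw [conjSubgroup_one, Subgroup.relIndex_self]; norm_num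
    · rw [conjSubgroup_one, Subgroup.relIndex_self]; norm_num
    · rw [Matrix.SpecialLinearGroup.coe_one, Matrix.one_mulVec, one_smul]
    · norm_num
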